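/- (Proposition: every B-orbit closure in the regular semisimple zero fiber contains a point of the form (diag(r), diag(s'), 0, 0).) Let (r, s, i, j) ∈ 𝔟_n × 𝔟*_n × ℂ^n × (ℂ^n)* with r upper triangular having pairwise distinct diagonal entries, s lower triangular, and μ_B(r,s,i,j) = π([r,s] + ij) = 0. Then there exists a diagonal n×n complex matrix D such that the point (diag(r), D, 0, 0) lies in the closure, with respect to the standard (Euclidean) topology on 𝔟_n × 𝔟*_n × ℂ^n × (ℂ^n)*, of the B_n-orbit {(b r b^{−1}, π(b s b^{−1}), b i, j b^{−1}) : b ∈ B_n}. -/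

import Mathlib

/-- `M` is an upper triangular complex matrix. -/
def IsUT {n : ℕ} (M : Matrix (Fin n) (Fin n) ℂ) : Prop :=
  ∀ i j : Fin n, j < i → M i j = 0

/-- `M` is a lower triangular complex matrix (the chosen representatives of
`𝔟*ₙ = 𝔤𝔩ₙ/𝔫⁺`). -/
def IsLT {n : ℕ} (M : Matrix (Fin n) (Fin n) ℂ) : Prop :=
  ∀ i j : Fin n, i < j → M i j = 0

/-- The projection `π : 𝔤𝔩ₙ → 𝔟*ₙ` zeroing out all entries strictly above the
diagonal. -/
def lowProj {n : ℕ} (M : Matrix (Fin n) (Fin n) ℂ) : Matrix (Fin n) (Fin n) ℂ :=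
  Matrix.of fun i j => if j ≤ i then M i j else 0

noncomputable def eigvec {n : ℕ} (r : Matrix (Fin n) (Fin n) ℂ) (k : Fin n) (a : Fin n) : ℂ :=
  if k ≤ a then (if a = k then 1 else 0)
  else -(∑ c ∈ (Finset.Ioi a).attach, r a c.1 * eigvec r k c.1) / (r a a - r k k)
termination_by n - a.val
decreasing_by
  have h := Finset.mem_Ioi.mp c.2
  have : a.val < c.1.val := h
  omega

variable {n : ℕ} (r : Matrix (Fin n) (Fin n) ℂ)

lemma eigvec_self (k : Fin n) : eigvec r k k = 1 := by
  rw [eigvec]; simp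

lemma eigvec_gt {k a : Fin n} (h : k < a) : eigvec r k a = 0 := by
  rw [eigvec]; simp [le_of_lt h, (Fin.lt_iff_val_lt_val.mp h).ne']
  intro h'; exact absurd h' (Fin.ne_of_gt h)

lemma eigvec_lt {k a : Fin n} (h : a < k) :
    eigvec r k a = -(∑ c ∈ Finset.Ioi a, r a c * eigvec r k c) / (r a a - r k k) := by
  rw [eigvec, if_neg (not_le.mpr h)]
  congr 1
  rw [← Finset.sum_attach (Finset.Ioi a) (fun c => r a c * eigvec r k c)]

lemma mulVec_eigvec (hr : IsUT r) (hdist : ∀ a c : Fin n, a ≠ c → r a a ≠ r c c)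
    (k a : Fin n) : ∑ c, r a c * eigvec r k c = r k k * eigvec r k a := by
  rcases lt_trichotomy a k with h | h | h
  · have hne : r a a - r k k ≠ 0 := sub_ne_zero.mpr (hdist a k (Fin.ne_of_lt h))
    have hv := eigvec_lt r h
    have hsplit : ∑ c, r a c * eigvec r k c
        = r a a * eigvec r k a + ∑ c ∈ Finset.Ioi a, r a c * eigvec r k c := by
      rw [← Finset.sum_subset (Finset.subset_univ (Finset.Ici a))
        (fun c _ hc => by rw [hr a c (not_le.mp (by simpa using hc)), zero_mul])]
      rw [← Finset.Ioi_insert, Finset.sum_insert Finset.notMem_Ioi_self]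
    rw [hsplit, hv]
    field_simp
    ring
  · subst h
    have : ∀ c, c ≠ a → r a c * eigvec r a c = 0 := by
      intro c hc
      rcases lt_or_gt_of_ne hc with h1 | h1
      · rw [hr a c h1, zero_mul]
      · rw [eigvec_gt r h1, mul_zero]
    rw [Finset.sum_eq_single a (fun c _ hc => this c hc) (by simp)]
  · have : ∀ c ∈ Finset.univ, r a c * eigvec r k c = 0 := by
      intro c _
      rcases le_or_gt c k with h1 | h1
      · rw [hr a c (lt_of_le_of_lt h1 h), zero_mul]
      · rw [eigvec_gt r h1, mul_zero]
    rw [Finset.sum_eq_zero this, eigvec_gt r h, mul_zero]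

lemma isUT_iff_blockTriangular {M : Matrix (Fin n) (Fin n) ℂ} :
    IsUT M ↔ M.BlockTriangular id := ⟨fun h _ _ hij => h _ _ hij, fun h a c hac => h hac⟩

lemma IsUT.mul {A B : Matrix (Fin n) (Fin n) ℂ} (hA : IsUT A) (hB : IsUT B) :
    IsUT (A * B) :=
  isUT_iff_blockTriangular.mpr
    ((isUT_iff_blockTriangular.mp hA).mul (isUT_iff_blockTriangular.mp hB))

/-- `A · N · B` is strictly upper triangular when `A, B` are upper triangular and
`N` is strictly upper triangular. -/
lemma sut_conj {A B N : Matrix (Fin n) (Fin n) ℂ} (hA : IsUT A) (hB : IsUT B)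
    (hN : ∀ a c : Fin n, c ≤ a → N a c = 0) :
    ∀ a c : Fin n, c ≤ a → (A * N * B) a c = 0 := by
  intro a c hac
  rw [Matrix.mul_apply]
  apply Finset.sum_eq_zero
  intro q _
  rcases le_or_gt q c with hq | hq
  · rw [Matrix.mul_apply]
    have : ∀ p ∈ Finset.univ, A a p * N p q = 0 := by
      intro p _
      rcases le_or_gt q p with hp | hp
      · rw [hN p q hp, mul_zero]
      · rw [hA a p (lt_of_lt_of_le hp (hq.trans hac)), zero_mul]
    rw [Finset.sum_eq_zero this, zero_mul]
  · rw [hB q c hq, mul_zero]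

lemma conj_vecMulVec (A B : Matrix (Fin n) (Fin n) ℂ) (i j : Fin n → ℂ) :
    A * Matrix.vecMulVec i j * B = Matrix.vecMulVec (A.mulVec i) (Matrix.vecMul j B) := by
  ext a c
  simp only [Matrix.mul_apply, Matrix.vecMulVec_apply, Matrix.mulVec, Matrix.vecMul,
    dotProduct, Finset.sum_mul, Finset.mul_sum]
  exact Finset.sum_congr rfl fun p _ => Finset.sum_congr rfl fun q _ => by ring

/-- Every `B`-orbit in the regular semisimple zero fiber of the moment map
`μ_B(r,s,i,j) = π([r,s] + ij)` contains, in the closure of its `Bₙ`-orbit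
`{(b r b⁻¹, π(b s b⁻¹), b i, j b⁻¹) : b ∈ Bₙ}` (Euclidean topology), a point of the
form `(diag(r), D, 0, 0)` with `D` diagonal. -/
theorem rss_orbit_closure_contains_diagonal_point
    (n : ℕ) (hn : 1 ≤ n)
    (r s : Matrix (Fin n) (Fin n) ℂ) (i j : Fin n → ℂ)
    (hr : IsUT r)
    (hdist : ∀ a c : Fin n, a ≠ c → r a a ≠ r c c)
    (hs : IsLT s)
    (hmoment : ∀ a c : Fin n, c ≤ a →
      (r * s - s * r + Matrix.vecMulVec i j) a c = 0) :
    ∃ d : Fin n → ℂ,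
      (Matrix.diagonal (fun k => r k k), Matrix.diagonal d,
          (0 : Fin n → ℂ), (0 : Fin n → ℂ)) ∈
        closure {q : Matrix (Fin n) (Fin n) ℂ × Matrix (Fin n) (Fin n) ℂ ×
            (Fin n → ℂ) × (Fin n → ℂ) |
          ∃ b : Matrix (Fin n) (Fin n) ℂ, IsUT b ∧ IsUnit b.det ∧
            q = (b * r * b⁻¹, lowProj (b * s * b⁻¹), Matrix.mulVec b i,
              Matrix.vecMul j b⁻¹)} := by
  classical
  set D : Matrix (Fin n) (Fin n) ℂ := Matrix.diagonal (fun k => r k k) with hD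
  -- the eigenvector matrix P
  set P : Matrix (Fin n) (Fin n) ℂ := Matrix.of (fun a k => eigvec r k a) with hP
  have hPut : IsUT P := by
    intro a k hk
    exact eigvec_gt r hk
  have hPdiag : ∀ k, P k k = 1 := fun k => eigvec_self r k
  have hPdet : IsUnit P.det := by
    rw [Matrix.det_of_upperTriangular (isUT_iff_blockTriangular.mp hPut)]
    simp [hPdiag]
  have hrP : r * P = P * D := by
    ext a k
    rw [Matrix.mul_apply, Matrix.mul_diagonal]
    exact (mulVec_eigvec r hr hdist k a).trans (mul_comm _ _)
  haveI : Invertible P := P.invertibleOfIsUnitDet hPdet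
  set b₀ : Matrix (Fin n) (Fin n) ℂ := P⁻¹ with hb₀
  have hb₀ut : IsUT b₀ :=
    isUT_iff_blockTriangular.mpr
      (Matrix.blockTriangular_inv_of_blockTriangular (isUT_iff_blockTriangular.mp hPut))
  have hb₀det : IsUnit b₀.det := P.isUnit_nonsing_inv_det hPdet
  have hb₀inv : b₀⁻¹ = P := P.nonsing_inv_nonsing_inv hPdet
  have hb₀inv_ut : IsUT b₀⁻¹ := hb₀inv ▸ hPut
  have hconj : b₀ * r * b₀⁻¹ = D := by
    rw [hb₀inv, hb₀, Matrix.mul_assoc, hrP, ← Matrix.mul_assoc,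
      P.nonsing_inv_mul hPdet, Matrix.one_mul]
  have hinv1 : b₀⁻¹ * b₀ = 1 := by
    rw [hb₀inv, hb₀, P.mul_nonsing_inv hPdet]
  -- transported data
  set S : Matrix (Fin n) (Fin n) ℂ := b₀ * s * b₀⁻¹ with hS
  set s' : Matrix (Fin n) (Fin n) ℂ := lowProj S with hs'
  set i' : Fin n → ℂ := b₀.mulVec i with hi'
  set j' : Fin n → ℂ := Matrix.vecMul j b₀⁻¹ with hj'
  have hs'low : ∀ a c : Fin n, c ≤ a → s' a c = S a c := by
    intro a c hac; simp [hs', lowProj, hac]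
  have hs'up : ∀ a c : Fin n, ¬ c ≤ a → s' a c = 0 := by
    intro a c hac; simp [hs', lowProj, hac]
  -- moment map transported
  have hconjM : b₀ * (r * s - s * r + Matrix.vecMulVec i j) * b₀⁻¹
      = D * S - S * D + Matrix.vecMulVec i' j' := by
    have e1 : b₀ * (r * s) * b₀⁻¹ = D * S := by
      rw [← hconj, hS]
      calc b₀ * (r * s) * b₀⁻¹ = b₀ * r * ((b₀⁻¹ * b₀) * (s * b₀⁻¹)) := by
            rw [hinv1, Matrix.one_mul]; noncomm_ring
        _ = b₀ * r * b₀⁻¹ * (b₀ * s * b₀⁻¹) := by noncomm_ring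
    have e2 : b₀ * (s * r) * b₀⁻¹ = S * D := by
      rw [← hconj, hS]
      calc b₀ * (s * r) * b₀⁻¹ = b₀ * s * ((b₀⁻¹ * b₀) * (r * b₀⁻¹)) := by
            rw [hinv1, Matrix.one_mul]; noncomm_ring
        _ = b₀ * s * b₀⁻¹ * (b₀ * r * b₀⁻¹) := by noncomm_ring
    rw [Matrix.mul_add, Matrix.add_mul, Matrix.mul_sub, Matrix.sub_mul, e1, e2,
      conj_vecMulVec, hi', hj']
  have hmom' : ∀ a c : Fin n, c ≤ a →
      (D * s' - s' * D + Matrix.vecMulVec i' j') a c = 0 := by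
    intro a c hac
    have h1 : (b₀ * (r * s - s * r + Matrix.vecMulVec i j) * b₀⁻¹) a c = 0 :=
      sut_conj hb₀ut hb₀inv_ut hmoment a c hac
    rw [hconjM] at h1
    have h2 : (D * s' - s' * D) a c = (D * S - S * D) a c := by
      simp only [Matrix.sub_apply, hD, Matrix.diagonal_mul, Matrix.mul_diagonal,
        hs'low a c hac]
    simp only [Matrix.add_apply, Matrix.sub_apply] at h1 ⊢
    rw [show (D * s') a c - (s' * D) a c = (D * s' - s' * D) a c by simp [Matrix.sub_apply],
      h2]
    simpa [Matrix.sub_apply] using h1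
  have hij0 : ∀ a : Fin n, i' a * j' a = 0 := by
    intro a
    have h := hmom' a a le_rfl
    simp only [Matrix.add_apply, Matrix.sub_apply, hD, Matrix.diagonal_mul,
      Matrix.mul_diagonal, Matrix.vecMulVec_apply] at h
    linear_combination h
  have hs'0 : ∀ a c : Fin n, c < a → i' a * j' c = 0 → s' a c = 0 := by
    intro a c hca h0
    have := hmom' a c hca.le
    simp only [Matrix.add_apply, Matrix.sub_apply, hD, Matrix.diagonal_mul,
      Matrix.mul_diagonal, Matrix.vecMulVec_apply, h0, add_zero, sub_eq_zero] at this
    -- this : r a a * s' a c = s' a c * r c c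
    have hne : r a a - r c c ≠ 0 := sub_ne_zero.mpr (hdist a c (Fin.ne_of_gt hca))
    have : (r a a - r c c) * s' a c = 0 := by linear_combination this
    exact (mul_eq_zero.mp this).resolve_left hne
  -- the scaling family
  set dm : ℝ → Fin n → ℂ := fun t a => if j' a = 0 then (t : ℂ) else (t : ℂ)⁻¹ with hdm
  set bt : ℝ → Matrix (Fin n) (Fin n) ℂ := fun t => Matrix.diagonal (dm t) * b₀ with hbt
  have hdmne : ∀ t : ℝ, t ∈ Set.Ioi (0:ℝ) → ∀ a, dm t a ≠ 0 := by
    intro t ht a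
    have htne : (t : ℂ) ≠ 0 := by exact_mod_cast (ne_of_gt ht)
    by_cases h : j' a = 0 <;> simp [hdm, h, htne]
  -- formula for components for t > 0
  have hC : ∀ t ∈ Set.Ioi (0:ℝ),
      (bt t * r * (bt t)⁻¹, lowProj (bt t * s * (bt t)⁻¹), (bt t).mulVec i,
        Matrix.vecMul j (bt t)⁻¹)
      = (D, Matrix.of (fun a c => if c ≤ a then dm t a * s' a c * (dm t c)⁻¹ else 0),
          fun a => dm t a * i' a, fun c => j' c * (dm t c)⁻¹) := by
    intro t ht
    have hdinv : (Matrix.diagonal (dm t))⁻¹ = Matrix.diagonal (fun a => (dm t a)⁻¹) := by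
      apply Matrix.inv_eq_right_inv
      rw [Matrix.diagonal_mul_diagonal]
      rw [show (fun a => dm t a * (dm t a)⁻¹) = fun _ => (1:ℂ) from
        funext fun a => mul_inv_cancel₀ (hdmne t ht a), Matrix.diagonal_one]
    have hbtinv : (bt t)⁻¹ = b₀⁻¹ * Matrix.diagonal (fun a => (dm t a)⁻¹) := by
      rw [hbt, Matrix.mul_inv_rev, hdinv]
    have hmid : ∀ M : Matrix (Fin n) (Fin n) ℂ,
        bt t * M * (bt t)⁻¹
          = Matrix.diagonal (dm t) * (b₀ * M * b₀⁻¹) * Matrix.diagonal (fun a => (dm t a)⁻¹) := by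
      intro M
      rw [hbt, hbtinv]
      noncomm_ring
    refine Prod.ext ?_ (Prod.ext ?_ (Prod.ext ?_ ?_))
    · show bt t * r * (bt t)⁻¹ = D
      rw [hmid, hconj, hD, Matrix.diagonal_mul_diagonal, Matrix.diagonal_mul_diagonal]
      refine congrArg Matrix.diagonal (funext fun a => ?_)
      field_simp [hdmne t ht a]
    · show lowProj (bt t * s * (bt t)⁻¹) = _
      have hentry : ∀ a c, (bt t * s * (bt t)⁻¹) a c = dm t a * S a c * (dm t c)⁻¹ := by
        intro a c
        rw [hmid, ← hS, Matrix.mul_diagonal, Matrix.diagonal_mul]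
      ext a c
      simp only [lowProj, Matrix.of_apply, hentry]
      by_cases hac : c ≤ a
      · simp [hac, hs'low a c hac]
      · simp [hac]
    · show (bt t).mulVec i = _
      rw [hbt, ← Matrix.mulVec_mulVec, ← hi']
      funext a
      rw [Matrix.mulVec_diagonal]
    · show Matrix.vecMul j (bt t)⁻¹ = _
      rw [hbtinv, ← Matrix.vecMul_vecMul, ← hj']
      funext c
      rw [Matrix.vecMul_diagonal]
  refine ⟨fun a => s' a a, ?_⟩
  -- limit argument
  have hten : Filter.Tendsto
      (fun t : ℝ => (D, Matrix.of (fun a c => if c ≤ a then dm t a * s' a c * (dm t c)⁻¹ else 0),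
        (fun a => dm t a * i' a : Fin n → ℂ), (fun c => j' c * (dm t c)⁻¹ : Fin n → ℂ)))
      (nhdsWithin 0 (Set.Ioi (0:ℝ)))
      (nhds (D, Matrix.diagonal (fun a => s' a a), (0 : Fin n → ℂ), (0 : Fin n → ℂ))) := by
    have htC : Filter.Tendsto (fun t : ℝ => (t : ℂ)) (nhdsWithin 0 (Set.Ioi (0:ℝ))) (nhds 0) := by
      have : Filter.Tendsto (fun t : ℝ => (t : ℂ)) (nhds 0) (nhds 0) := by
        simpa using (Complex.continuous_ofReal.tendsto (0:ℝ))
      exact this.mono_left nhdsWithin_le_nhds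
    refine Filter.Tendsto.prodMk_nhds tendsto_const_nhds
      (Filter.Tendsto.prodMk_nhds ?_ (Filter.Tendsto.prodMk_nhds ?_ ?_))
    · refine tendsto_pi_nhds.mpr ?_
      intro a
      rw [tendsto_pi_nhds]
      intro c
      simp only [Matrix.of_apply]
      by_cases hac : c ≤ a
      · rcases eq_or_lt_of_le hac with he | hlt
        · subst he
          have : Matrix.diagonal (fun a => s' a a) c c = s' c c := by simp
          rw [this]
          refine Filter.Tendsto.congr'
            (Filter.eventuallyEq_of_mem self_mem_nhdsWithin fun t ht => ?_) tendsto_const_nhds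
          rw [if_pos le_rfl, mul_comm (dm t c) (s' c c), mul_inv_cancel_right₀ (hdmne t ht c)]
        · have hdiag : Matrix.diagonal (fun a => s' a a) a c = 0 :=
            Matrix.diagonal_apply_ne _ (Fin.ne_of_gt hlt)
          rw [hdiag]
          by_cases hz : s' a c = 0
          · simp only [hz, mul_zero, zero_mul, if_pos hac]
            exact tendsto_const_nhds
          · have hi'ne : i' a ≠ 0 := by
              intro h0
              exact hz (hs'0 a c hlt (by rw [h0, zero_mul]))
            have hj'ne : j' c ≠ 0 := by
              intro h0
              exact hz (hs'0 a c hlt (by rw [h0, mul_zero]))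
            have hj'a : j' a = 0 := by
              rcases mul_eq_zero.mp (hij0 a) with h | h
              · exact absurd h hi'ne
              · exact h
            have heq : (fun t : ℝ => if c ≤ a then dm t a * s' a c * (dm t c)⁻¹ else 0)
                = fun t : ℝ => (t : ℂ) * s' a c * (t : ℂ) := by
              funext t
              simp [hdm, hac, hj'a, hj'ne]
            rw [heq]
            have := (htC.mul_const (s' a c)).mul htC
            simpa using this
      · simp only [if_neg hac]
        have hdiag : Matrix.diagonal (fun a => s' a a) a c = 0 := by
          apply Matrix.diagonal_apply_ne
          intro h; exact hac (le_of_eq h.symm)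
        rw [hdiag]
        exact tendsto_const_nhds
    · rw [tendsto_pi_nhds]
      intro a
      by_cases hz : i' a = 0
      · simp only [hz, mul_zero]
        simpa using (tendsto_const_nhds : Filter.Tendsto (fun _ : ℝ => (0:ℂ)) _ _)
      · have hj'a : j' a = 0 := by
          rcases mul_eq_zero.mp (hij0 a) with h | h
          · exact absurd h hz
          · exact h
        have heq : (fun t : ℝ => dm t a * i' a) = fun t : ℝ => (t : ℂ) * i' a := by
          funext t; simp [hdm, hj'a]
        rw [heq]
        simpa using htC.mul_const (i' a)
    · rw [tendsto_pi_nhds]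
      intro c
      by_cases hz : j' c = 0
      · simp only [hz, zero_mul]
        simpa using (tendsto_const_nhds : Filter.Tendsto (fun _ : ℝ => (0:ℂ)) _ _)
      · have heq : (fun t : ℝ => j' c * (dm t c)⁻¹) = fun t : ℝ => j' c * (t : ℂ) := by
          funext t; simp [hdm, hz]
        rw [heq]
        simpa using htC.const_mul (j' c)
  have hmem : ∀ᶠ t in nhdsWithin 0 (Set.Ioi (0:ℝ)),
      (fun t : ℝ => (bt t * r * (bt t)⁻¹, lowProj (bt t * s * (bt t)⁻¹), (bt t).mulVec i,
        Matrix.vecMul j (bt t)⁻¹)) t ∈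
      {q : Matrix (Fin n) (Fin n) ℂ × Matrix (Fin n) (Fin n) ℂ ×
            (Fin n → ℂ) × (Fin n → ℂ) |
          ∃ b : Matrix (Fin n) (Fin n) ℂ, IsUT b ∧ IsUnit b.det ∧
            q = (b * r * b⁻¹, lowProj (b * s * b⁻¹), Matrix.mulVec b i,
              Matrix.vecMul j b⁻¹)} := by
    filter_upwards [eventually_mem_nhdsWithin] with t ht
    refine ⟨bt t, ?_, ?_, rfl⟩
    · have hdut : IsUT (Matrix.diagonal (dm t)) := by
        intro a c hca
        exact Matrix.diagonal_apply_ne _ (Fin.ne_of_gt hca)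
      exact hdut.mul hb₀ut
    · rw [hbt, Matrix.det_mul, Matrix.det_diagonal]
      exact (isUnit_iff_ne_zero.mpr (Finset.prod_ne_zero_iff.mpr
        (fun a _ => hdmne t ht a))).mul hb₀det
  have htF : Filter.Tendsto
      (fun t : ℝ => (bt t * r * (bt t)⁻¹, lowProj (bt t * s * (bt t)⁻¹), (bt t).mulVec i,
        Matrix.vecMul j (bt t)⁻¹))
      (nhdsWithin 0 (Set.Ioi (0:ℝ)))
      (nhds (D, Matrix.diagonal (fun a => s' a a), (0 : Fin n → ℂ), (0 : Fin n → ℂ))) := by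
    refine Filter.Tendsto.congr' ?_ hten
    exact (Filter.eventuallyEq_of_mem self_mem_nhdsWithin (fun t ht => (hC t ht).symm))
  exact mem_closure_of_tendsto htF hmem
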